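/- Let t be a real number, let G be any finite simple graph with at least one vertex, and let H be a finite simple graph with at least one vertex satisfying χ(H) ≤ (1/2)(ω(H) + Δ(H) + 1) + t. Then the join G + H satisfies χ(G + H) ≤ (1/2)(ω(G + H) + Δ(G + H) + 1) + t. -/

import Mathlib

/-- The join of two simple graphs: all edges within each graph plus all edges between them. -/
def SimpleGraph.join {α β : Type*} (G : SimpleGraph α) (H : SimpleGraph β) :
    SimpleGraph (α ⊕ β) where
  Adj u v := match u, v with
    | Sum.inl a, Sum.inl a' => G.Adj a a'
    | Sum.inr b, Sum.inr b' => H.Adj b b'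
    | Sum.inl _, Sum.inr _ => True
    | Sum.inr _, Sum.inl _ => True
  symm := ⟨by rintro (a|b) (a'|b') h <;> first | trivial | exact h.symm⟩
  loopless := ⟨by rintro (a|b) h <;> exact SimpleGraph.irrefl _ h⟩

noncomputable instance {α β : Type*} (G : SimpleGraph α) (H : SimpleGraph β) :
    DecidableRel (G.join H).Adj := Classical.decRel _



open Finset SimpleGraph

lemma aux_pairing {α : Type*} [Fintype α] [DecidableEq α] (G : SimpleGraph α) :
    ∀ s : Finset α, ∃ (n : ℕ) (C : Finset α), ↑C ⊆ (↑s : Set α) ∧ G.IsClique ↑C ∧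
      (G.induce (↑s : Set α)).Colorable n ∧ 2 * n ≤ s.card + C.card := by
  intro s
  induction s using Finset.strongInduction with
  | _ s ih =>
    by_cases hc : G.IsClique (↑s : Set α)
    · refine ⟨s.card, s, le_refl _, hc, ?_, by omega⟩
      have := (G.induce (↑s : Set α)).colorable_of_fintype
      simpa using this
    · rw [SimpleGraph.isClique_iff, Set.Pairwise] at hc
      push_neg at hc
      obtain ⟨u, hu, v, hv, huv, hadj⟩ := hc
      rw [Finset.mem_coe] at hu hv
      obtain ⟨n, C, hCs, hCc, ⟨c⟩, hcard⟩ := ih (s \ {u, v}) (Finset.sdiff_ssubset (by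
          intro x hx; simp at hx; rcases hx with rfl | rfl <;> assumption) (by simp))
      refine ⟨n + 1, C, ?_, hCc, ?_, ?_⟩
      · exact hCs.trans (by intro x hx; simp at hx ⊢; exact hx.1)
      · have cnew : (G.induce (↑s : Set α)).Coloring (Option (Fin n)) := by
          refine SimpleGraph.Coloring.mk (fun x =>
            if h : (x : α) = u ∨ (x : α) = v then none
            else some (c ⟨x, by
              rcases x with ⟨x, hx⟩
              push_neg at h
              simp only [Finset.coe_sdiff, Set.mem_diff, Finset.mem_coe] at *
              exact ⟨hx, by simp [h.1, h.2]⟩⟩)) ?_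
          rintro ⟨x, hx⟩ ⟨y, hy⟩ hxy
          simp only [SimpleGraph.comap_adj, Function.Embedding.coe_subtype] at hxy
          by_cases h1 : x = u ∨ x = v <;> by_cases h2 : y = u ∨ y = v <;>
            simp only [dif_pos, dif_neg, h1, h2, dite_true, dite_false]
          · -- both in {u,v}: contradiction
            exfalso
            rcases h1 with rfl | rfl <;> rcases h2 with rfl | rfl
            · exact (G.loopless.irrefl _ hxy)
            · exact hadj hxy
            · exact hadj hxy.symm
            · exact (G.loopless.irrefl _ hxy)
          · simp
          · simp
          · intro hcc
            push_neg at h1 h2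
            have hx' : x ∈ (↑(s \ ({u, v} : Finset α)) : Set α) := by
              simp only [Finset.coe_sdiff, Set.mem_diff, Finset.mem_coe] at hx ⊢
              exact ⟨hx, by simp [h1.1, h1.2]⟩
            have hy' : y ∈ (↑(s \ ({u, v} : Finset α)) : Set α) := by
              simp only [Finset.coe_sdiff, Set.mem_diff, Finset.mem_coe] at hy ⊢
              exact ⟨hy, by simp [h2.1, h2.2]⟩
            exact c.valid (v := ⟨x, hx'⟩) (w := ⟨y, hy'⟩) (by simpa using hxy)
              (Option.some_injective _ hcc)
        have h3 := cnew.colorable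
        simpa using h3
      · have : (s \ ({u, v} : Finset α)).card = s.card - 2 := by
          rw [Finset.card_sdiff_of_subset (by intro x hx; simp at hx; rcases hx with rfl | rfl <;> assumption)]
          simp [Finset.card_pair huv]
        have h2 : 2 ≤ s.card := by
          have : ({u, v} : Finset α) ⊆ s := by
            intro x hx; simp at hx; rcases hx with rfl | rfl <;> assumption
          calc 2 = ({u,v} : Finset α).card := (Finset.card_pair huv).symm
          _ ≤ s.card := Finset.card_le_card this
        omega

lemma two_chrom_le {α : Type*} [Fintype α] (G : SimpleGraph α) :
    2 * G.chromaticNumber.toNat ≤ Fintype.card α + G.cliqueNum := by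
  classical
  obtain ⟨n, C, hCs, hCc, hcol, hcard⟩ := aux_pairing G Finset.univ
  -- transfer colorable through induceUnivIso
  have hcolG : G.Colorable n := by
    obtain ⟨c⟩ := hcol
    rw [Finset.coe_univ] at c
    exact ⟨SimpleGraph.Hom.comp c G.induceUnivIso.symm.toHom⟩
  have h1 : G.chromaticNumber.toNat ≤ n := by
    have := hcolG.chromaticNumber_le
    exact ENat.toNat_le_of_le_coe this
  have h2 : C.card ≤ G.cliqueNum := hCc.card_le_cliqueNum
  have h3 := Finset.card_univ (α := α)
  omega

lemma join_colorable' {α β : Type*} (G : SimpleGraph α) (H : SimpleGraph β) {m n : ℕ}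
    (hg : G.Colorable m) (hh : H.Colorable n) : (G.join H).Colorable (m + n) := by
  obtain ⟨cg⟩ := hg; obtain ⟨ch⟩ := hh
  have c : (G.join H).Coloring (Fin m ⊕ Fin n) := SimpleGraph.Coloring.mk
    (fun x => match x with | Sum.inl a => Sum.inl (cg a) | Sum.inr b => Sum.inr (ch b))
    (by
      rintro (a|b) (a'|b') h <;> simp only [ne_eq, Sum.inl.injEq, Sum.inr.injEq,
        reduceCtorEq, not_false_eq_true]
      · exact cg.valid h
      · exact ch.valid h)
  have := c.colorable
  simpa using this

lemma join_cliqueNum' {α β : Type*} [Fintype α] [Fintype β]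
    (G : SimpleGraph α) (H : SimpleGraph β) :
    G.cliqueNum + H.cliqueNum ≤ (G.join H).cliqueNum := by
  classical
  obtain ⟨sg, hg⟩ := G.exists_isNClique_cliqueNum
  obtain ⟨sh, hh⟩ := H.exists_isNClique_cliqueNum
  set S : Finset (α ⊕ β) := sg.map ⟨Sum.inl, Sum.inl_injective⟩ ∪
    sh.map ⟨Sum.inr, Sum.inr_injective⟩ with hS
  have hclique : (G.join H).IsClique ↑S := by
    rintro x hx y hy hxy
    simp only [hS, Finset.coe_union, Set.mem_union, Finset.coe_map,
      Set.mem_image, Finset.mem_coe, Function.Embedding.coeFn_mk] at hx hy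
    rcases hx with ⟨a, ha, rfl⟩ | ⟨b, hb, rfl⟩ <;>
      rcases hy with ⟨a', ha', rfl⟩ | ⟨b', hb', rfl⟩
    · exact hg.1 ha ha' (fun h => hxy (by rw [h]))
    · trivial
    · trivial
    · exact hh.1 hb hb' (fun h => hxy (by rw [h]))
  have hcard : S.card = G.cliqueNum + H.cliqueNum := by
    rw [hS, Finset.card_union_of_disjoint (by simp [Finset.disjoint_left]),
      Finset.card_map, Finset.card_map, hg.2, hh.2]
  have := hclique.card_le_cliqueNum
  omega

lemma join_maxDegree' {α β : Type*} [Fintype α] [Fintype β] [Nonempty β]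
    (G : SimpleGraph α) (H : SimpleGraph β) [DecidableRel H.Adj] :
    H.maxDegree + Fintype.card α ≤ (G.join H).maxDegree := by
  classical
  obtain ⟨b, hb⟩ := H.exists_maximal_degree_vertex
  have hnb : (G.join H).neighborFinset (Sum.inr b) =
      (Finset.univ : Finset α).map ⟨Sum.inl, Sum.inl_injective⟩ ∪
      (H.neighborFinset b).map ⟨Sum.inr, Sum.inr_injective⟩ := by
    ext x
    cases x with
    | inl a =>
      simp only [SimpleGraph.mem_neighborFinset, Finset.mem_union, Finset.mem_map,
        Function.Embedding.coeFn_mk, Finset.mem_univ, reduceCtorEq]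
      constructor
      · intro _; left; exact ⟨a, trivial, rfl⟩
      · intro _; trivial
    | inr b' =>
      simp only [SimpleGraph.mem_neighborFinset, Finset.mem_union, Finset.mem_map,
        Function.Embedding.coeFn_mk, reduceCtorEq]
      constructor
      · intro h; right; exact ⟨b', by simpa [SimpleGraph.mem_neighborFinset] using (show H.Adj b b' from h), rfl⟩
      · rintro ((⟨a, _, h⟩) | ⟨b'', hb'', h⟩)
        · exact absurd h (by simp)
        · cases Sum.inr_injective h; exact hb''
  have hdeg : (G.join H).degree (Sum.inr b) = Fintype.card α + H.degree b := by
    rw [← SimpleGraph.card_neighborFinset_eq_degree, hnb,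
      Finset.card_union_of_disjoint (by simp [Finset.disjoint_left]),
      Finset.card_map, Finset.card_map, Finset.card_univ,
      SimpleGraph.card_neighborFinset_eq_degree]
  have := (G.join H).degree_le_maxDegree (Sum.inr b)
  omega


/-- If `H` satisfies Reed's bound with excess `t`, then so does `G + H` for any graph `G`. -/
theorem join_mem_Rt {α β : Type*} [Fintype α] [Fintype β] [Nonempty α] [Nonempty β]
    (G : SimpleGraph α) (H : SimpleGraph β) [DecidableRel H.Adj] (t : ℝ)
    (hH : (H.chromaticNumber.toNat : ℝ) ≤
      (1 / 2) * ((H.cliqueNum : ℝ) + H.maxDegree + 1) + t) :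
    ((G.join H).chromaticNumber.toNat : ℝ) ≤
      (1 / 2) * (((G.join H).cliqueNum : ℝ) + (G.join H).maxDegree + 1) + t := by
  classical
  have cg : G.Colorable G.chromaticNumber.toNat := G.colorable_chromaticNumber_of_fintype
  have ch : H.Colorable H.chromaticNumber.toNat := H.colorable_chromaticNumber_of_fintype
  have hJcol := join_colorable' G H cg ch
  have hJ : (G.join H).chromaticNumber.toNat ≤
      G.chromaticNumber.toNat + H.chromaticNumber.toNat :=
    ENat.toNat_le_of_le_coe (by exact_mod_cast hJcol.chromaticNumber_le)
  have hG2 := two_chrom_le G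
  have hclq := join_cliqueNum' G H
  have hdeg := join_maxDegree' G H
  have hJ' : ((G.join H).chromaticNumber.toNat : ℝ) ≤
      (G.chromaticNumber.toNat : ℝ) + H.chromaticNumber.toNat := by exact_mod_cast hJ
  have hG2' : 2 * (G.chromaticNumber.toNat : ℝ) ≤ Fintype.card α + G.cliqueNum := by
    exact_mod_cast hG2
  have hclq' : (G.cliqueNum : ℝ) + H.cliqueNum ≤ (G.join H).cliqueNum := by exact_mod_cast hclq
  have hdeg' : (H.maxDegree : ℝ) + Fintype.card α ≤ (G.join H).maxDegree := by
    exact_mod_cast hdeg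
  linarith
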